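/- For λ > 0 let v_λ be the unique positive classical solution of ε Δv = v^{1+p} in Ω with v = λ^{1/p} b on ∂Ω. Then for any 0 < λ₁ < λ₂ one has 0 ≤ v_{λ₂}(x) − v_{λ₁}(x) < (λ₂^{1/p} − λ₁^{1/p}) b for all x ∈ Ω, and moreover ∫_Ω v_{λ₁}^p dx < ∫_Ω v_{λ₂}^p dx; in particular λ ↦ ∫_Ω v_λ^p dx is continuous and strictly increasing. -/

import Mathlib

open MeasureTheory Metric Set Filter Topology
open scoped RealInnerProductSpace

noncomputable section

/-- Laplacian of a real-valued function on Euclidean space. -/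
def lap {n : ℕ} (f : EuclideanSpace ℝ (Fin n) → ℝ) (x : EuclideanSpace ℝ (Fin n)) : ℝ :=
  ∑ i : Fin n, iteratedFDeriv ℝ 2 f x ![EuclideanSpace.single i 1, EuclideanSpace.single i 1]

/-- `v` is a positive classical solution of `ε Δv = v^{1+p}` in `Ω` with `v = c` on `∂Ω`. -/
def IsLocalSol {n : ℕ} (Ω : Set (EuclideanSpace ℝ (Fin n))) (ε p c : ℝ)
    (v : EuclideanSpace ℝ (Fin n) → ℝ) : Prop :=
  ContinuousOn v (closure Ω) ∧ ContDiffOn ℝ 2 v Ω ∧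
  (∀ x ∈ closure Ω, 0 < v x) ∧ (∀ x ∈ frontier Ω, v x = c) ∧
  ∀ x ∈ Ω, ε * lap v x = v x ^ (1 + p)

/-- 1-D second-derivative test at a local minimum. -/
lemma oneD_second_nonneg {g G : ℝ → ℝ} {d : ℝ} (hmin : IsLocalMin g 0)
    (hg : ∀ᶠ t in 𝓝 (0:ℝ), HasDerivAt g (G t) t) (hG : HasDerivAt G d 0) : 0 ≤ d := by
  by_contra hlt
  push_neg at hlt
  have hG0 : G 0 = 0 := by
    have h0 : HasDerivAt g (G 0) 0 := hg.self_of_nhds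
    rw [← h0.deriv]
    exact hmin.deriv_eq_zero
  have hslope : Tendsto (fun t => G t / t) (𝓝[≠] (0:ℝ)) (𝓝 d) := by
    have h := hasDerivAt_iff_tendsto_slope.mp hG
    have : (slope G 0) = fun t => G t / t := by
      funext t; simp [slope_def_field, hG0]
    rwa [this] at h
  have hslope' : Tendsto (fun t => G t / t) (𝓝[>] (0:ℝ)) (𝓝 d) :=
    hslope.mono_left (nhdsWithin_mono 0 (fun t ht => ne_of_gt ht))
  have hev : ∀ᶠ t in 𝓝[>] (0:ℝ), G t < 0 := by
    filter_upwards [hslope'.eventually_lt_const (show d < d/2 by linarith),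
      self_mem_nhdsWithin] with t h1 h2
    have : G t / t < 0 := lt_trans h1 (by linarith)
    exact (div_neg_iff.mp this).resolve_left (fun h => absurd h.2 (not_lt.mpr (le_of_lt h2))) |>.1
  obtain ⟨u, hu, hIoo⟩ := mem_nhdsGT_iff_exists_Ioo_subset.mp hev
  have hminev : ∀ᶠ t in 𝓝 (0:ℝ), g 0 ≤ g t := hmin
  obtain ⟨δ, hδ, hball⟩ := Metric.eventually_nhds_iff.mp (hg.and hminev)
  set t₀ : ℝ := min (u/2) (δ/2) with ht₀
  have ht₀pos : 0 < t₀ := lt_min (by linarith [mem_Ioi.mp hu]) (by linarith)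
  have hmem : ∀ t ∈ Icc (0:ℝ) t₀, HasDerivAt g (G t) t ∧ g 0 ≤ g t := by
    intro t ht
    apply hball
    rw [Real.dist_eq, sub_zero, abs_of_nonneg ht.1]
    exact lt_of_le_of_lt ht.2 (lt_of_le_of_lt (min_le_right _ _) (by linarith))
  have hanti : StrictAntiOn g (Icc (0:ℝ) t₀) := by
    apply strictAntiOn_of_deriv_neg (convex_Icc 0 t₀)
    · intro t ht
      exact ((hmem t ht).1.continuousAt).continuousWithinAt
    · intro t ht
      rw [interior_Icc] at ht
      rw [(hmem t ⟨ht.1.le, ht.2.le⟩).1.deriv]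
      exact hIoo ⟨ht.1, lt_of_lt_of_le ht.2 (le_trans (min_le_left _ _) (by linarith [mem_Ioi.mp hu]))⟩
  have h1 : g t₀ < g 0 := hanti (left_mem_Icc.mpr ht₀pos.le) (right_mem_Icc.mpr ht₀pos.le) ht₀pos
  exact absurd ((hmem t₀ (right_mem_Icc.mpr ht₀pos.le)).2) (not_le.mpr h1)


lemma second_directional_nonneg {E : Type*} [NormedAddCommGroup E] [NormedSpace ℝ E]
    {f : E → ℝ} {Ω : Set E} (hΩ : IsOpen Ω) {x : E} (hx : x ∈ Ω)
    (hf : ContDiffOn ℝ 2 f Ω) (hmin : IsLocalMin f x) (e : E) :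
    0 ≤ fderiv ℝ (fderiv ℝ f) x e e := by
  set L : ℝ → E := fun t => x + t • e with hLdef
  have hL : ∀ t, HasDerivAt L e t := by
    intro t
    have h1 : HasDerivAt (fun t : ℝ => t • e) ((1:ℝ) • e) t := (hasDerivAt_id t).smul_const e
    simpa [L] using h1.const_add x
  have hLc : Continuous L := continuous_const.add (continuous_id.smul continuous_const)
  have hL0 : L 0 = x := by simp [L]
  set U : Set ℝ := L ⁻¹' Ω with hUdef
  have hU : IsOpen U := hΩ.preimage hLc
  have hU0 : (0:ℝ) ∈ U := by simp [U, L, hx]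
  have hdf : ∀ y ∈ Ω, DifferentiableAt ℝ f y := fun y hy =>
    (hf.contDiffAt (hΩ.mem_nhds hy)).differentiableAt (by norm_num)
  have hF : ContDiffOn ℝ 1 (fderiv ℝ f) Ω := hf.fderiv_of_isOpen hΩ (by norm_num)
  have hFd : DifferentiableAt ℝ (fderiv ℝ f) x :=
    (hF.contDiffAt (hΩ.mem_nhds hx)).differentiableAt one_ne_zero
  have hg : ∀ᶠ t in 𝓝 (0:ℝ), HasDerivAt (f ∘ L) (fderiv ℝ f (L t) e) t := by
    filter_upwards [hU.mem_nhds hU0] with t ht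
    exact (hdf _ ht).hasFDerivAt.comp_hasDerivAt t (hL t)
  have h1 : HasDerivAt (fun t => fderiv ℝ f (L t)) (fderiv ℝ (fderiv ℝ f) x e) 0 := by
    have hFd' : HasFDerivAt (fderiv ℝ f) (fderiv ℝ (fderiv ℝ f) x) (L 0) := by
      rw [hL0]; exact hFd.hasFDerivAt
    exact hFd'.comp_hasDerivAt 0 (hL 0)
  have hG : HasDerivAt (fun t => fderiv ℝ f (L t) e) (fderiv ℝ (fderiv ℝ f) x e e) 0 := by
    have h2 := h1.clm_apply (hasDerivAt_const 0 e)
    simpa using h2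
  have hming : IsLocalMin (f ∘ L) 0 := by
    apply IsLocalMin.comp_continuous _ hLc.continuousAt
    rwa [hL0]
  exact oneD_second_nonneg hming hg hG


lemma lap_nonneg_of_localMin {n : ℕ} {f : EuclideanSpace ℝ (Fin n) → ℝ}
    {Ω : Set (EuclideanSpace ℝ (Fin n))} (hΩ : IsOpen Ω) {x : EuclideanSpace ℝ (Fin n)}
    (hx : x ∈ Ω) (hf : ContDiffOn ℝ 2 f Ω) (hmin : IsLocalMin f x) : 0 ≤ lap f x := by
  unfold lap
  apply Finset.sum_nonneg
  intro i _
  rw [iteratedFDeriv_two_apply]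
  simp only [Matrix.cons_val_zero, Matrix.cons_val_one, Matrix.head_cons]
  exact second_directional_nonneg hΩ hx hf hmin _

lemma lap_sub {n : ℕ} {Ω : Set (EuclideanSpace ℝ (Fin n))} (hΩ : IsOpen Ω)
    {f g : EuclideanSpace ℝ (Fin n) → ℝ} (hf : ContDiffOn ℝ 2 f Ω) (hg : ContDiffOn ℝ 2 g Ω)
    {x : EuclideanSpace ℝ (Fin n)} (hx : x ∈ Ω) :
    lap (fun y => f y - g y) x = lap f x - lap g x := by
  have hdf : ∀ y ∈ Ω, DifferentiableAt ℝ f y := fun y hy =>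
    (hf.contDiffAt (hΩ.mem_nhds hy)).differentiableAt (by norm_num)
  have hdg : ∀ y ∈ Ω, DifferentiableAt ℝ g y := fun y hy =>
    (hg.contDiffAt (hΩ.mem_nhds hy)).differentiableAt (by norm_num)
  have hF : DifferentiableAt ℝ (fderiv ℝ f) x :=
    ((hf.fderiv_of_isOpen hΩ (by norm_num)).contDiffAt (hΩ.mem_nhds hx)).differentiableAt
      one_ne_zero
  have hG : DifferentiableAt ℝ (fderiv ℝ g) x :=
    ((hg.fderiv_of_isOpen hΩ (by norm_num)).contDiffAt (hΩ.mem_nhds hx)).differentiableAt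
      one_ne_zero
  have hev : (fderiv ℝ (fun z => f z - g z)) =ᶠ[𝓝 x] fun y => fderiv ℝ f y - fderiv ℝ g y := by
    filter_upwards [hΩ.mem_nhds hx] with y hy
    exact fderiv_sub (hdf y hy) (hdg y hy)
  have key : fderiv ℝ (fderiv ℝ (fun z => f z - g z)) x
      = fderiv ℝ (fderiv ℝ f) x - fderiv ℝ (fderiv ℝ g) x := by
    rw [hev.fderiv_eq]
    exact fderiv_sub hF hG
  unfold lap
  rw [← Finset.sum_sub_distrib]
  apply Finset.sum_congr rfl
  intro i _
  rw [iteratedFDeriv_two_apply, iteratedFDeriv_two_apply, iteratedFDeriv_two_apply, key]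
  simp

lemma lap_const_sub {n : ℕ} {Ω : Set (EuclideanSpace ℝ (Fin n))} (hΩ : IsOpen Ω)
    {f : EuclideanSpace ℝ (Fin n) → ℝ} (hf : ContDiffOn ℝ 2 f Ω)
    {x : EuclideanSpace ℝ (Fin n)} (hx : x ∈ Ω) (C : ℝ) :
    lap (fun y => C - f y) x = - lap f x := by
  have hdf : ∀ y ∈ Ω, DifferentiableAt ℝ f y := fun y hy =>
    (hf.contDiffAt (hΩ.mem_nhds hy)).differentiableAt (by norm_num)
  have hF : DifferentiableAt ℝ (fderiv ℝ f) x :=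
    ((hf.fderiv_of_isOpen hΩ (by norm_num)).contDiffAt (hΩ.mem_nhds hx)).differentiableAt
      one_ne_zero
  have hev : (fderiv ℝ (fun z => C - f z)) =ᶠ[𝓝 x] fun y => -(fderiv ℝ f y) := by
    filter_upwards [hΩ.mem_nhds hx] with y hy
    rw [fderiv_fun_sub (differentiableAt_const C) (hdf y hy), fderiv_const_apply]
    simp
  have key : fderiv ℝ (fderiv ℝ (fun z => C - f z)) x = -(fderiv ℝ (fderiv ℝ f) x) := by
    rw [hev.fderiv_eq, fderiv_fun_neg]
  unfold lap
  rw [← Finset.sum_neg_distrib]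
  apply Finset.sum_congr rfl
  intro i _
  rw [iteratedFDeriv_two_apply, iteratedFDeriv_two_apply, key]
  simp

/-- Minimum principle. -/
lemma min_principle {n : ℕ} {Ω : Set (EuclideanSpace ℝ (Fin n))}
    (hΩopen : IsOpen Ω) (hΩbdd : Bornology.IsBounded Ω) {w : EuclideanSpace ℝ (Fin n) → ℝ}
    (hwc : ContinuousOn w (closure Ω)) (hw2 : ContDiffOn ℝ 2 w Ω)
    (hfr : ∀ x ∈ frontier Ω, 0 ≤ w x)
    (hint : ∀ x ∈ Ω, w x < 0 → lap w x < 0) :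
    ∀ z ∈ closure Ω, 0 ≤ w z := by
  intro z hz
  have hcomp : IsCompact (closure Ω) := hΩbdd.isCompact_closure
  obtain ⟨x₀, hx₀, hmin⟩ := hcomp.exists_isMinOn ⟨z, hz⟩ hwc
  by_contra hneg
  push_neg at hneg
  have hw0 : w x₀ < 0 := lt_of_le_of_lt (isMinOn_iff.mp hmin z hz) hneg
  have hx₀Ω : x₀ ∈ Ω := by
    by_contra h
    have hfr' : x₀ ∈ frontier Ω := by
      rw [frontier, hΩopen.interior_eq]
      exact ⟨hx₀, h⟩
    exact absurd hw0 (not_lt.mpr (hfr _ hfr'))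
  have hlm : IsLocalMin w x₀ := by
    filter_upwards [hΩopen.mem_nhds hx₀Ω] with y hy
    exact isMinOn_iff.mp hmin y (subset_closure hy)
  exact absurd (hint x₀ hx₀Ω hw0) (not_lt.mpr (lap_nonneg_of_localMin hΩopen hx₀Ω hw2 hlm))

section main
variable {n : ℕ} {Ω : Set (EuclideanSpace ℝ (Fin n))}
  {ε b p : ℝ} {v : ℝ → EuclideanSpace ℝ (Fin n) → ℝ}

lemma upper_bound (hΩopen : IsOpen Ω) (hΩbdd : Bornology.IsBounded Ω)
    (hε : 0 < ε) (hb : 0 < b) (hp : 0 < p) {lam : ℝ} (hlam : 0 < lam)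
    (h : IsLocalSol Ω ε p (lam ^ (1 / p) * b) (v lam)) :
    ∀ x ∈ closure Ω, v lam x ≤ lam ^ (1 / p) * b := by
  obtain ⟨hc, hsm, hpos, hbd, heq⟩ := h
  have key := min_principle hΩopen hΩbdd
    (w := fun y => lam ^ (1 / p) * b - v lam y)
    (continuousOn_const.sub hc) (contDiffOn_const.sub hsm)
    (fun x hx => by rw [hbd x hx]; simp)
    (fun x hx _ => by
      rw [lap_const_sub hΩopen hsm hx]
      have h1 := heq x hx
      have h2 : (0:ℝ) < v lam x ^ (1 + p) :=
        Real.rpow_pos_of_pos (hpos x (subset_closure hx)) _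
      nlinarith)
  intro x hx
  have := key x hx
  linarith

lemma compare_sols (hΩopen : IsOpen Ω) (hΩbdd : Bornology.IsBounded Ω)
    (hε : 0 < ε) (hb : 0 < b) (hp : 0 < p) {lam₁ lam₂ : ℝ} (h1 : 0 < lam₁) (h12 : lam₁ < lam₂)
    (hs1 : IsLocalSol Ω ε p (lam₁ ^ (1 / p) * b) (v lam₁))
    (hs2 : IsLocalSol Ω ε p (lam₂ ^ (1 / p) * b) (v lam₂)) :
    ∀ x ∈ closure Ω, v lam₁ x ≤ v lam₂ x := by
  obtain ⟨hc1, hsm1, hpos1, hbd1, heq1⟩ := hs1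
  obtain ⟨hc2, hsm2, hpos2, hbd2, heq2⟩ := hs2
  have key := min_principle hΩopen hΩbdd
    (w := fun y => v lam₂ y - v lam₁ y)
    (hc2.sub hc1) (hsm2.sub hsm1)
    (fun x hx => by
      rw [hbd1 x hx, hbd2 x hx]
      have : lam₁ ^ (1/p) ≤ lam₂ ^ (1/p) :=
        Real.rpow_le_rpow h1.le h12.le (by positivity)
      nlinarith)
    (fun x hx hneg => by
      rw [lap_sub hΩopen hsm2 hsm1 hx]
      have h1' := heq1 x hx
      have h2' := heq2 x hx
      have hlt : v lam₂ x ^ (1 + p) < v lam₁ x ^ (1 + p) :=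
        Real.rpow_lt_rpow (hpos2 x (subset_closure hx)).le (by linarith) (by linarith)
      nlinarith)
  intro x hx
  have := key x hx
  linarith

lemma strict_bound (hΩopen : IsOpen Ω) (hΩbdd : Bornology.IsBounded Ω)
    (hε : 0 < ε) (hb : 0 < b) (hp : 0 < p) {lam₁ lam₂ : ℝ} (h1 : 0 < lam₁) (h12 : lam₁ < lam₂)
    (hs1 : IsLocalSol Ω ε p (lam₁ ^ (1 / p) * b) (v lam₁))
    (hs2 : IsLocalSol Ω ε p (lam₂ ^ (1 / p) * b) (v lam₂)) :
    ∀ x ∈ Ω, v lam₂ x - v lam₁ x < (lam₂ ^ (1 / p) - lam₁ ^ (1 / p)) * b := by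
  have hcmp := compare_sols hΩopen hΩbdd hε hb hp h1 h12 hs1 hs2
  obtain ⟨hc1, hsm1, hpos1, hbd1, heq1⟩ := hs1
  obtain ⟨hc2, hsm2, hpos2, hbd2, heq2⟩ := hs2
  set C : ℝ := (lam₂ ^ (1 / p) - lam₁ ^ (1 / p)) * b with hCdef
  have hCpos : 0 < C := by
    have : lam₁ ^ (1/p) < lam₂ ^ (1/p) :=
      Real.rpow_lt_rpow h1.le h12 (by positivity)
    have : 0 < lam₂ ^ (1/p) - lam₁ ^ (1/p) := by linarith
    positivity
  have hlapw : ∀ x ∈ Ω, v lam₁ x < v lam₂ x →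
      lap (fun y => C - (v lam₂ y - v lam₁ y)) x < 0 := by
    intro x hx hlt
    rw [lap_const_sub hΩopen (hsm2.sub hsm1) hx, lap_sub hΩopen hsm2 hsm1 hx]
    have h1' := heq1 x hx
    have h2' := heq2 x hx
    have hgt : v lam₁ x ^ (1 + p) < v lam₂ x ^ (1 + p) :=
      Real.rpow_lt_rpow (hpos1 x (subset_closure hx)).le hlt (by linarith)
    nlinarith
  have hunn := min_principle hΩopen hΩbdd
    (w := fun y => C - (v lam₂ y - v lam₁ y))
    (continuousOn_const.sub (hc2.sub hc1)) (contDiffOn_const.sub (hsm2.sub hsm1))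
    (fun x hx => by rw [hbd1 x hx, hbd2 x hx]; simp [hCdef]; linarith)
    (fun x hx hneg => by
      apply hlapw x hx
      have hle := hcmp x (subset_closure hx)
      by_contra hge
      push_neg at hge
      have : v lam₂ x = v lam₁ x := le_antisymm hge hle
      rw [this] at hneg
      linarith)
  intro x hx
  rcases lt_or_ge (v lam₂ x - v lam₁ x) C with h | h
  · exact h
  · exfalso
    have hunnx := hunn x (subset_closure hx)
    have heq0 : C - (v lam₂ x - v lam₁ x) = 0 :=
      le_antisymm (by linarith) hunnx
    have hlm : IsLocalMin (fun y => C - (v lam₂ y - v lam₁ y)) x := by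
      filter_upwards [hΩopen.mem_nhds hx] with y hy
      have := hunn y (subset_closure hy)
      rw [heq0]
      exact this
    have hnn := lap_nonneg_of_localMin hΩopen hx
      (contDiffOn_const.sub (hsm2.sub hsm1)) hlm
    have hlt : v lam₁ x < v lam₂ x := by linarith
    linarith [hlapw x hx hlt]
lemma frontier_nonempty (hn : 1 ≤ n) (hΩopen : IsOpen Ω) (hΩbdd : Bornology.IsBounded Ω)
    (hΩne : Ω.Nonempty) : (frontier Ω).Nonempty := by
  haveI : Nontrivial (EuclideanSpace ℝ (Fin n)) := by
    refine ⟨⟨EuclideanSpace.single ⟨0, hn⟩ 1, 0, ?_⟩⟩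
    intro h
    have := congrArg (fun w : EuclideanSpace ℝ (Fin n) => w ⟨0, hn⟩) h
    simp [EuclideanSpace.single] at this
  rw [nonempty_iff_ne_empty]
  intro h
  rw [frontier_eq_empty_iff] at h
  rcases h with h | h
  · exact absurd h (nonempty_iff_ne_empty.mp hΩne)
  · rw [h] at hΩbdd
    exact NormedSpace.unbounded_univ ℝ (EuclideanSpace ℝ (Fin n)) hΩbdd

lemma integral_strict (hn : 1 ≤ n) (hΩopen : IsOpen Ω) (hΩbdd : Bornology.IsBounded Ω)
    (hΩne : Ω.Nonempty) (hε : 0 < ε) (hb : 0 < b) (hp : 0 < p)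
    {lam₁ lam₂ : ℝ} (h1 : 0 < lam₁) (h12 : lam₁ < lam₂)
    (hs1 : IsLocalSol Ω ε p (lam₁ ^ (1 / p) * b) (v lam₁))
    (hs2 : IsLocalSol Ω ε p (lam₂ ^ (1 / p) * b) (v lam₂)) :
    (∫ x in Ω, v lam₁ x ^ p) < ∫ x in Ω, v lam₂ x ^ p := by
  have hcmp := compare_sols hΩopen hΩbdd hε hb hp h1 h12 hs1 hs2
  have hK : IsCompact (closure Ω) := hΩbdd.isCompact_closure
  have hmeas : MeasurableSet Ω := hΩopen.measurableSet
  obtain ⟨hc1, hsm1, hpos1, hbd1, heq1⟩ := hs1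
  obtain ⟨hc2, hsm2, hpos2, hbd2, heq2⟩ := hs2
  have hcp1 : ContinuousOn (fun x => v lam₁ x ^ p) (closure Ω) :=
    hc1.rpow_const (fun x _ => Or.inr hp.le)
  have hcp2 : ContinuousOn (fun x => v lam₂ x ^ p) (closure Ω) :=
    hc2.rpow_const (fun x _ => Or.inr hp.le)
  have hint1 : IntegrableOn (fun x => v lam₁ x ^ p) Ω volume :=
    (hcp1.integrableOn_compact hK).mono_set subset_closure
  have hint2 : IntegrableOn (fun x => v lam₂ x ^ p) Ω volume :=
    (hcp2.integrableOn_compact hK).mono_set subset_closure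
  set g : EuclideanSpace ℝ (Fin n) → ℝ := fun x => v lam₂ x ^ p - v lam₁ x ^ p with hgdef
  have hgint : IntegrableOn g Ω volume := hint2.sub hint1
  have hgnn0 : ∀ᵐ x ∂(volume.restrict Ω), 0 ≤ g x := by
    rw [ae_restrict_iff' hmeas]
    apply ae_of_all
    intro x hx
    exact sub_nonneg.mpr (Real.rpow_le_rpow (hpos1 x (subset_closure hx)).le
      (hcmp x (subset_closure hx)) hp.le)
  have hgnn : 0 ≤ᵐ[volume.restrict Ω] g := by
    filter_upwards [hgnn0] with x hx using hx
  -- find an interior point where v lam₁ < v lam₂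
  obtain ⟨y, hy⟩ := frontier_nonempty hn hΩopen hΩbdd hΩne
  have hyc : y ∈ closure Ω := frontier_subset_closure hy
  set C : ℝ := (lam₂ ^ (1 / p) - lam₁ ^ (1 / p)) * b with hCdef
  have hCpos : 0 < C := by
    have : lam₁ ^ (1/p) < lam₂ ^ (1/p) := Real.rpow_lt_rpow h1.le h12 (by positivity)
    have h' : 0 < lam₂ ^ (1/p) - lam₁ ^ (1/p) := by linarith
    positivity
  have hwc : ContinuousOn (fun x => v lam₂ x - v lam₁ x) (closure Ω) := hc2.sub hc1
  have hwy : v lam₂ y - v lam₁ y = C := by rw [hbd1 y hy, hbd2 y hy]; ring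
  have hev : ∀ᶠ z in 𝓝[closure Ω] y, 0 < v lam₂ z - v lam₁ z := by
    have ht : Tendsto (fun z => v lam₂ z - v lam₁ z) (𝓝[closure Ω] y) (𝓝 C) := by
      have := hwc y hyc
      rwa [ContinuousWithinAt, hwy] at this
    exact ht.eventually (eventually_gt_nhds hCpos)
  haveI : (𝓝[Ω] y).NeBot := mem_closure_iff_nhdsWithin_neBot.mp hyc
  have hev' : ∀ᶠ z in 𝓝[Ω] y, 0 < v lam₂ z - v lam₁ z :=
    hev.filter_mono (nhdsWithin_mono y subset_closure)
  obtain ⟨x₀, hx₀gt, hx₀Ω⟩ := (hev'.and self_mem_nhdsWithin).exists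
  have hgx₀ : 0 < g x₀ := sub_pos.mpr
    (Real.rpow_lt_rpow (hpos1 x₀ (subset_closure hx₀Ω)).le (by linarith) hp)
  have hclos_nhds : closure Ω ∈ 𝓝 x₀ :=
    mem_of_superset (hΩopen.mem_nhds hx₀Ω) subset_closure
  have hgcont : ContinuousAt g x₀ :=
    ((hcp2.sub hcp1) x₀ (subset_closure hx₀Ω)).continuousAt hclos_nhds
  have hev2 : ∀ᶠ z in 𝓝 x₀, 0 < g z ∧ z ∈ Ω := by
    have e1 : ∀ᶠ z in 𝓝 x₀, 0 < g z := hgcont.eventually (eventually_gt_nhds hgx₀)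
    have e2 : ∀ᶠ z in 𝓝 x₀, z ∈ Ω := hΩopen.mem_nhds hx₀Ω
    exact e1.and e2
  obtain ⟨r, hr, hball⟩ := Metric.eventually_nhds_iff.mp hev2
  have hsub : ball x₀ r ⊆ Function.support g ∩ Ω := by
    intro z hz
    have := hball (mem_ball.mp hz)
    exact ⟨ne_of_gt this.1, this.2⟩
  have hposint : 0 < ∫ x in Ω, g x := by
    rw [setIntegral_pos_iff_support_of_nonneg_ae hgnn hgint]
    exact lt_of_lt_of_le (measure_ball_pos volume x₀ hr) (measure_mono hsub)
  have hsplit : ∫ x in Ω, g x = (∫ x in Ω, v lam₂ x ^ p) - ∫ x in Ω, v lam₁ x ^ p :=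
    integral_sub hint2 hint1
  linarith [hsplit ▸ hposint]


lemma abs_bound (hΩopen : IsOpen Ω) (hΩbdd : Bornology.IsBounded Ω)
    (hε : 0 < ε) (hb : 0 < b) (hp : 0 < p)
    (hv : ∀ lam, 0 < lam → IsLocalSol Ω ε p (lam ^ (1 / p) * b) (v lam))
    {lam mu : ℝ} (hl : 0 < lam) (hm : 0 < mu) {x : EuclideanSpace ℝ (Fin n)} (hx : x ∈ Ω) :
    |v lam x - v mu x| ≤ |lam ^ (1 / p) - mu ^ (1 / p)| * b := by
  rcases lt_trichotomy lam mu with h | h | h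
  · have hle := compare_sols hΩopen hΩbdd hε hb hp hl h (hv lam hl) (hv mu hm) x (subset_closure hx)
    have hlt := strict_bound hΩopen hΩbdd hε hb hp hl h (hv lam hl) (hv mu hm) x hx
    have hr : lam ^ (1/p) ≤ mu ^ (1/p) := Real.rpow_le_rpow hl.le h.le (by positivity)
    rw [abs_sub_comm, abs_of_nonneg (by linarith), abs_sub_comm, abs_of_nonneg (by linarith)]
    linarith
  · subst h
    simp only [sub_self, abs_zero]
    positivity
  · have hle := compare_sols hΩopen hΩbdd hε hb hp hm h (hv mu hm) (hv lam hl) x (subset_closure hx)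
    have hlt := strict_bound hΩopen hΩbdd hε hb hp hm h (hv mu hm) (hv lam hl) x hx
    have hr : mu ^ (1/p) ≤ lam ^ (1/p) := Real.rpow_le_rpow hm.le h.le (by positivity)
    rw [abs_of_nonneg (by linarith), abs_of_nonneg (by linarith)]
    linarith

lemma continuity_int (hΩopen : IsOpen Ω) (hΩbdd : Bornology.IsBounded Ω)
    (hε : 0 < ε) (hb : 0 < b) (hp : 0 < p)
    (hv : ∀ lam, 0 < lam → IsLocalSol Ω ε p (lam ^ (1 / p) * b) (v lam)) :
    ContinuousOn (fun lam => ∫ x in Ω, v lam x ^ p) (Set.Ioi 0) := by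
  have hmeas : MeasurableSet Ω := hΩopen.measurableSet
  intro lam₀ hlam₀
  rw [Set.mem_Ioi] at hlam₀
  apply continuousWithinAt_of_dominated
    (bound := fun _ => ((lam₀ + 1) ^ (1 / p) * b) ^ p)
  · filter_upwards [self_mem_nhdsWithin] with lam hlam
    rw [Set.mem_Ioi] at hlam
    exact ((((hv lam hlam).1).mono subset_closure).rpow_const
      (fun x _ => Or.inr hp.le)).aestronglyMeasurable hmeas
  · filter_upwards [self_mem_nhdsWithin,
      nhdsWithin_le_nhds (Iio_mem_nhds (lt_add_one lam₀))] with lam hlam hlt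
    rw [Set.mem_Ioi] at hlam
    rw [Set.mem_Iio] at hlt
    rw [ae_restrict_iff' hmeas]
    apply ae_of_all
    intro x hx
    have hpos := (hv lam hlam).2.2.1 x (subset_closure hx)
    have hub := upper_bound hΩopen hΩbdd hε hb hp hlam (hv lam hlam) x (subset_closure hx)
    rw [Real.norm_eq_abs, abs_of_pos (Real.rpow_pos_of_pos hpos p)]
    have h1 : lam ^ (1/p) ≤ (lam₀ + 1) ^ (1/p) :=
      Real.rpow_le_rpow hlam.le hlt.le (by positivity)
    have h2 : v lam x ≤ (lam₀ + 1) ^ (1/p) * b := le_trans hub (by nlinarith)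
    exact Real.rpow_le_rpow hpos.le h2 hp.le
  · exact integrableOn_const hΩbdd.measure_lt_top.ne
  · rw [ae_restrict_iff' hmeas]
    apply ae_of_all
    intro x hx
    have hvx : Tendsto (fun lam => v lam x) (𝓝[Set.Ioi 0] lam₀) (𝓝 (v lam₀ x)) := by
      have hdiff : Tendsto (fun lam => v lam x - v lam₀ x) (𝓝[Set.Ioi 0] lam₀) (𝓝 0) := by
        apply squeeze_zero_norm' (a := fun lam => |lam ^ (1/p) - lam₀ ^ (1/p)| * b)
        · filter_upwards [self_mem_nhdsWithin] with lam hlam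
          rw [Real.norm_eq_abs]
          exact abs_bound hΩopen hΩbdd hε hb hp hv (Set.mem_Ioi.mp hlam) hlam₀ hx
        · have hc : ContinuousAt (fun lam : ℝ => lam ^ (1/p)) lam₀ :=
            Real.continuousAt_rpow_const lam₀ (1/p) (Or.inl hlam₀.ne')
          have ht : Tendsto (fun lam : ℝ => |lam ^ (1/p) - lam₀ ^ (1/p)| * b) (𝓝 lam₀)
              (𝓝 (|lam₀ ^ (1/p) - lam₀ ^ (1/p)| * b)) :=
            ((hc.sub continuousAt_const).abs.mul continuousAt_const)
          simp only [sub_self, abs_zero, zero_mul] at ht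
          exact ht.mono_left nhdsWithin_le_nhds
      have := hdiff.add (tendsto_const_nhds (x := v lam₀ x))
      simpa using this
    have hx0 : 0 < v lam₀ x := (hv lam₀ hlam₀).2.2.1 x (subset_closure hx)
    have hcp : ContinuousAt (fun z : ℝ => z ^ p) (v lam₀ x) :=
      Real.continuousAt_rpow_const _ p (Or.inl hx0.ne')
    exact (hcp.tendsto.comp hvx : _)


end main

/-- for the family `v_λ` of positive solutions of `ε Δv = v^{1+p}` with boundary
value `λ^{1/p} b`, one has `0 ≤ v_{λ₂} − v_{λ₁} < (λ₂^{1/p} − λ₁^{1/p}) b` in `Ω` for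
`0 < λ₁ < λ₂`, the integrals `∫_Ω v_λ^p` are strictly increasing in `λ`, and the map
`λ ↦ ∫_Ω v_λ^p` is continuous and strictly increasing on `(0,∞)`. -/
theorem statement_4
    {n : ℕ} (hn : 1 ≤ n)
    (Ω : Set (EuclideanSpace ℝ (Fin n)))
    (hΩopen : IsOpen Ω) (hΩbdd : Bornology.IsBounded Ω) (hΩne : Ω.Nonempty)
    (ε b p : ℝ) (hε : 0 < ε) (hb : 0 < b) (hp : 0 < p)
    (v : ℝ → EuclideanSpace ℝ (Fin n) → ℝ)
    (hv : ∀ lam, 0 < lam → IsLocalSol Ω ε p (lam ^ (1 / p) * b) (v lam)) :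
    (∀ lam₁ lam₂, 0 < lam₁ → lam₁ < lam₂ →
      ∀ x ∈ Ω, 0 ≤ v lam₂ x - v lam₁ x ∧
        v lam₂ x - v lam₁ x < (lam₂ ^ (1 / p) - lam₁ ^ (1 / p)) * b) ∧
    (∀ lam₁ lam₂, 0 < lam₁ → lam₁ < lam₂ →
      (∫ x in Ω, v lam₁ x ^ p) < ∫ x in Ω, v lam₂ x ^ p) ∧
    ContinuousOn (fun lam => ∫ x in Ω, v lam x ^ p) (Set.Ioi 0) ∧
    StrictMonoOn (fun lam => ∫ x in Ω, v lam x ^ p) (Set.Ioi 0) := by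
  refine ⟨?_, ?_, ?_, ?_⟩
  · intro lam₁ lam₂ h1 h12 x hx
    constructor
    · have := compare_sols hΩopen hΩbdd hε hb hp h1 h12 (hv _ h1) (hv _ (h1.trans h12)) x
        (subset_closure hx)
      linarith
    · exact strict_bound hΩopen hΩbdd hε hb hp h1 h12 (hv _ h1) (hv _ (h1.trans h12)) x hx
  · intro lam₁ lam₂ h1 h12
    exact integral_strict hn hΩopen hΩbdd hΩne hε hb hp h1 h12 (hv _ h1) (hv _ (h1.trans h12))
  · exact continuity_int hΩopen hΩbdd hε hb hp hv
  · intro a ha a' ha' haa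
    exact integral_strict hn hΩopen hΩbdd hΩne hε hb hp (Set.mem_Ioi.mp ha) haa (hv _ (Set.mem_Ioi.mp ha))
      (hv _ ((Set.mem_Ioi.mp ha).trans haa))
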